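/- Let T be a 2-dimensional real inner product space with complex structure J, R_θ = cos θ · id + sin θ · J, and let A, A' : T → T be symmetric trace-free linear maps. Then the commutator is invariant under rotation: [R_θ∘A, R_θ∘A'] = [A, A']. -/

import Mathlib

open RealInnerProductSpace

lemma anticomm {T : Type*} [NormedAddCommGroup T] [InnerProductSpace ℝ T]
    [FiniteDimensional ℝ T] (hdim : Module.finrank ℝ T = 2)
    (J : T →ₗ[ℝ] T) (hJorth : ∀ x y : T, ⟪J x, J y⟫ = ⟪x, y⟫)
    (hJ2 : ∀ x : T, J (J x) = -x)
    (A : T →ₗ[ℝ] T)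
    (hAsym : ∀ x y : T, ⟪A x, y⟫ = ⟪x, A y⟫) (hAtr : LinearMap.trace ℝ T A = 0) :
    A.comp J = - (J.comp A) := by
  set e : T := stdOrthonormalBasis ℝ T ⟨0, by rw [hdim]; norm_num⟩ with he
  have hee : ⟪e, e⟫ = 1 := by
    have := (stdOrthonormalBasis ℝ T).orthonormal.1 ⟨0, by rw [hdim]; norm_num⟩
    rw [he, real_inner_self_eq_norm_sq, this]; norm_num
  have heJe : ⟪e, J e⟫ = 0 := by
    have h1 : ⟪J e, J (J e)⟫ = ⟪e, J e⟫ := hJorth e (J e)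
    rw [hJ2, inner_neg_right, real_inner_comm] at h1
    linarith
  have hJeJe : ⟪J e, J e⟫ = 1 := by rw [hJorth]; exact hee
  have hJee : ⟪J e, e⟫ = 0 := by rw [real_inner_comm]; exact heJe
  -- orthonormal family
  set f : Fin 2 → T := ![e, J e] with hf
  have horth : Orthonormal ℝ f := by
    rw [orthonormal_iff_ite]
    intro i j
    fin_cases i <;> fin_cases j <;>
      simp [hf, hee, heJe, hJeJe, hJee, show ‖e‖ = 1 by rw [norm_eq_sqrt_real_inner, hee, Real.sqrt_one],
        show ‖J e‖ = 1 by rw [norm_eq_sqrt_real_inner, hJeJe, Real.sqrt_one]]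
  have hli := horth.linearIndependent
  have hcard : Fintype.card (Fin 2) = Module.finrank ℝ T := by simp [hdim]
  set b : Module.Basis (Fin 2) ℝ T := basisOfLinearIndependentOfCardEqFinrank hli hcard with hb
  have hbcoe : ⇑b = f := coe_basisOfLinearIndependentOfCardEqFinrank hli hcard
  set ob : OrthonormalBasis (Fin 2) ℝ T := b.toOrthonormalBasis (by rwa [hbcoe]) with hob
  have hobcoe : ⇑ob = f := by rw [hob, Module.Basis.coe_toOrthonormalBasis, hbcoe]
  have hrepr : ∀ (x : T), x = ⟪e, x⟫ • e + ⟪J e, x⟫ • J e := by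
    intro x
    have := ob.sum_repr' x
    rw [Fin.sum_univ_two, hobcoe] at this
    simpa [hf] using this.symm
  -- trace
  have htr : ⟪e, A e⟫ + ⟪J e, A (J e)⟫ = 0 := by
    have := LinearMap.trace_eq_matrix_trace ℝ ob.toBasis A
    rw [hAtr] at this
    rw [Matrix.trace, Fin.sum_univ_two] at this
    simp only [Matrix.diag_apply, LinearMap.toMatrix_apply, OrthonormalBasis.coe_toBasis,
      OrthonormalBasis.coe_toBasis_repr_apply, ob.repr_apply_apply, hobcoe] at this
    simpa [hf] using this.symm
  have hAe : A e = ⟪e, A e⟫ • e + ⟪J e, A e⟫ • J e := hrepr (A e)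
  have hAJe : A (J e) = ⟪J e, A e⟫ • e - ⟪e, A e⟫ • J e := by
    have h := hrepr (A (J e))
    have h1 : ⟪e, A (J e)⟫ = ⟪J e, A e⟫ := by
      rw [real_inner_comm, hAsym, real_inner_comm]
    have h2 : ⟪J e, A (J e)⟫ = -⟪e, A e⟫ := by linarith
    rw [h1, h2] at h
    rw [h]; module
  apply b.ext
  intro i
  fin_cases i <;>
    simp only [hbcoe, hf, Fin.mk_zero, Fin.mk_one, Fin.isValue, Matrix.cons_val_zero,
      Matrix.cons_val_one, Matrix.head_cons, LinearMap.comp_apply, LinearMap.neg_apply]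
  · rw [hAJe]
    nth_rewrite 3 [hAe]
    simp [hJ2]; module
  · rw [hJ2, map_neg, hAe]
    nth_rewrite 1 [hAJe]
    simp [hJ2]; module

/-- The rotation of angle `θ` associated with the complex structure `J`. -/
noncomputable def rot {T : Type*} [AddCommGroup T] [Module ℝ T]
    (J : T →ₗ[ℝ] T) (θ : ℝ) : T →ₗ[ℝ] T :=
  Real.cos θ • LinearMap.id + Real.sin θ • J

theorem stmt_7 {T : Type*} [NormedAddCommGroup T] [InnerProductSpace ℝ T]
    [FiniteDimensional ℝ T] (hdim : Module.finrank ℝ T = 2)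
    (J : T →ₗ[ℝ] T) (hJorth : ∀ x y : T, ⟪J x, J y⟫ = ⟪x, y⟫)
    (hJ2 : ∀ x : T, J (J x) = -x)
    (A A' : T →ₗ[ℝ] T)
    (hAsym : ∀ x y : T, ⟪A x, y⟫ = ⟪x, A y⟫) (hAtr : LinearMap.trace ℝ T A = 0)
    (hA'sym : ∀ x y : T, ⟪A' x, y⟫ = ⟪x, A' y⟫) (hA'tr : LinearMap.trace ℝ T A' = 0) :
    ∀ θ : ℝ,
      ((rot J θ).comp A).comp ((rot J θ).comp A') -
        ((rot J θ).comp A').comp ((rot J θ).comp A) = A.comp A' - A'.comp A := by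
  intro θ
  have key : ∀ (B B' : T →ₗ[ℝ] T), B.comp J = -(J.comp B) →
      ((rot J θ).comp B).comp ((rot J θ).comp B') = B.comp B' := by
    intro B B' hB
    have hBJ : ∀ y, B (J y) = -J (B y) := fun y => by
      have := LinearMap.ext_iff.1 hB y; simpa using this
    ext x
    simp only [rot, LinearMap.comp_apply, LinearMap.add_apply, LinearMap.smul_apply,
      LinearMap.id_apply, map_add, map_smul, hBJ, hJ2, smul_neg, map_neg, smul_smul]
    match_scalars <;> nlinarith [Real.sin_sq_add_cos_sq θ]
  rw [key A A' (anticomm hdim J hJorth hJ2 A hAsym hAtr),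
    key A' A (anticomm hdim J hJorth hJ2 A' hA'sym hA'tr)]
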